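/- In the setting where agent i's preference R_i is uniform over strict orders on a finite set A_i of size m and independent of R_{-i}, and φ is strategy-proof, the expected menu size satisfies E[Δ_{i|i}^φ(R_{-i})] = m · P[ρ_i^φ(R) = 1], i.e. the expected cardinality of i's menu equals m times the probability that i receives her most-preferred element. -/

import Mathlib

open Classical in
lemma fiber_equiv {A : Type*} [Fintype A] {m : ℕ} [NeZero m] (b c : A) :
    Fintype.card {σ : A ≃ Fin m // σ.symm 0 = b}
      = Fintype.card {σ : A ≃ Fin m // σ.symm 0 = c} := by
  apply Fintype.card_congr
  refine ⟨fun ⟨σ, hσ⟩ => ⟨(Equiv.swap b c).trans σ, ?_⟩,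
          fun ⟨σ, hσ⟩ => ⟨(Equiv.swap b c).trans σ, ?_⟩, ?_, ?_⟩
  · simp [Equiv.symm_trans_apply, hσ]
  · simp [Equiv.symm_trans_apply, hσ]
  · intro ⟨σ, hσ⟩; ext x; simp [Equiv.swap_apply_self]
  · intro ⟨σ, hσ⟩; ext x; simp [Equiv.swap_apply_self]

open Classical in
lemma fiber_card {A : Type*} [Fintype A] {m : ℕ} [NeZero m] (hm : Fintype.card A = m)
    (b : A) :
    m * Fintype.card {σ : A ≃ Fin m // σ.symm 0 = b} = m.factorial := by
  have h1 : ∑ c : A, Fintype.card {σ : A ≃ Fin m // σ.symm 0 = c}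
      = Fintype.card (A ≃ Fin m) := by
    rw [← Fintype.card_sigma]
    exact Fintype.card_congr (Equiv.sigmaFiberEquiv (fun σ : A ≃ Fin m => σ.symm 0))
  have h2 : Fintype.card (A ≃ Fin m) = m.factorial := by
    rw [Fintype.card_equiv (Fintype.equivFinOfCardEq hm), hm]
  have h3 : ∑ c : A, Fintype.card {σ : A ≃ Fin m // σ.symm 0 = c}
      = Fintype.card A * Fintype.card {σ : A ≃ Fin m // σ.symm 0 = b} := by
    rw [Finset.sum_congr rfl (fun c _ => fiber_equiv c b), Finset.sum_const,
      Finset.card_univ, smul_eq_mul]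
  calc m * Fintype.card {σ : A ≃ Fin m // σ.symm 0 = b}
      = Fintype.card A * Fintype.card {σ : A ≃ Fin m // σ.symm 0 = b} := by rw [hm]
    _ = m.factorial := by rw [← h3, h1, h2]

open Classical in
lemma menu_count {A : Type*} [Fintype A] {m : ℕ} [NeZero m] (hm : Fintype.card A = m)
    (B : Set A) :
    m * Fintype.card {σ : A ≃ Fin m // σ.symm 0 ∈ B} = B.ncard * m.factorial := by
  have key : Fintype.card {σ : A ≃ Fin m // σ.symm 0 ∈ B}
      = ∑ b ∈ B.toFinset, Fintype.card {σ : A ≃ Fin m // σ.symm 0 = b} := by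
    rw [Fintype.card_subtype]
    rw [Finset.card_eq_sum_card_fiberwise
      (f := fun σ : A ≃ Fin m => σ.symm 0) (t := B.toFinset)
      (fun σ hσ => by simpa using (Finset.mem_filter.mp hσ).2)]
    refine Finset.sum_congr rfl fun b hb => ?_
    rw [Fintype.card_subtype]
    congr 1
    ext σ
    simp only [Finset.mem_filter, Finset.mem_univ, true_and]
    exact ⟨fun h => h.2, fun h => ⟨by simpa [h] using Set.mem_toFinset.mp hb, h⟩⟩
  rw [key, Finset.mul_sum]
  rw [Finset.sum_congr rfl (fun b _ => fiber_card hm b), Finset.sum_const,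
    Set.ncard_eq_toFinset_card', smul_eq_mul]

/-- with `R_i` uniform over strict orders on `A_i` (`|A_i| = m`,
orders encoded as rankings `σ : A ≃ Fin m`, `x R_i y ↔ σ x ≤ σ y`), independent of
the (possibly random) opposing profile `ω ∈ Ω` (a finite probability space with
weights `w`), and with the strategy-proof mechanism given, for each opposing profile
`ω`, by a function `F ω` of `i`'s report that always selects an optimal element of
the menu `Set.range (F ω)`, the expected menu size equals `m` times the probability
that `i` receives her most-preferred element (rank `ρ_i = 1`). -/

theorem stmt_5 {A : Type*} [Fintype A] (m : ℕ) (hm : Fintype.card A = m)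
    {Ω : Type*} [Fintype Ω] (w : Ω → ℝ) (hw : ∀ ω, 0 ≤ w ω) (hw1 : ∑ ω, w ω = 1)
    (F : Ω → (A ≃ Fin m) → A)
    (hSP : ∀ (ω : Ω) (σ : A ≃ Fin m) (a : A), a ∈ Set.range (F ω) →
      (σ (F ω σ) : ℕ) ≤ σ a) :
    ∑ ω, w ω * (Set.ncard (Set.range (F ω)) : ℝ)
      = (m : ℝ) * ∑ ω, w ω *
          ((Nat.card {σ : A ≃ Fin m //
              Set.ncard {x : A | (σ x : ℕ) ≤ σ (F ω σ)} = 1} : ℝ) / (m.factorial : ℝ)) := by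
  classical
  rw [Finset.mul_sum]
  refine Finset.sum_congr rfl fun ω _ => ?_
  rw [← mul_assoc, mul_comm (m : ℝ) (w ω), mul_assoc]
  congr 1
  -- A is nonempty, so m ≠ 0
  have hA : Nonempty A := ⟨F ω (Fintype.equivFinOfCardEq hm)⟩
  have hm0 : m ≠ 0 := by
    rw [← hm]; exact Fintype.card_ne_zero
  have : NeZero m := ⟨hm0⟩
  -- the rank-1 condition is equivalent to the top choice lying in the menu
  have hiff : ∀ σ : A ≃ Fin m,
      Set.ncard {x : A | (σ x : ℕ) ≤ σ (F ω σ)} = 1 ↔ σ.symm 0 ∈ Set.range (F ω) := by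
    intro σ
    have step : Set.ncard {x : A | (σ x : ℕ) ≤ σ (F ω σ)} = 1 ↔ σ (F ω σ) = 0 := by
      constructor
      · intro h
        by_contra hne
        have h1 : F ω σ ∈ {x : A | (σ x : ℕ) ≤ σ (F ω σ)} := Set.mem_setOf_eq ▸ le_refl _
        have h2 : σ.symm 0 ∈ {x : A | (σ x : ℕ) ≤ σ (F ω σ)} := by
          simp [Set.mem_setOf_eq]
        have hne2 : σ.symm 0 ≠ F ω σ := by
          intro heq
          apply hne
          rw [← heq]; simp
        have : 1 < Set.ncard {x : A | (σ x : ℕ) ≤ σ (F ω σ)} :=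
          Set.one_lt_ncard_iff (Set.toFinite _) |>.mpr ⟨σ.symm 0, F ω σ, h2, h1, hne2⟩
        omega
      · intro h
        have : {x : A | (σ x : ℕ) ≤ σ (F ω σ)} = {F ω σ} := by
          ext x
          simp only [Set.mem_setOf_eq, Set.mem_singleton_iff]
          constructor
          · intro hx
            have hv : (σ (F ω σ) : ℕ) = 0 := by rw [h]; rfl
            have hx0 : (σ x : ℕ) = 0 := Nat.le_zero.mp (hv ▸ hx)
            exact σ.injective (Fin.ext (by rw [hx0, hv]))
          · intro hx; subst hx; exact le_refl _
        rw [this, Set.ncard_singleton]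
    rw [step]
    constructor
    · intro h
      refine ⟨σ, ?_⟩
      have := congrArg σ.symm h
      simp only [Equiv.symm_apply_apply] at this
      exact this
    · rintro ⟨τ, hτ⟩
      have := hSP ω σ (σ.symm 0) ⟨τ, hτ⟩
      simp only [Equiv.apply_symm_apply] at this
      exact Fin.ext (by simpa using this)
  have hcard : Nat.card {σ : A ≃ Fin m //
      Set.ncard {x : A | (σ x : ℕ) ≤ σ (F ω σ)} = 1}
      = Fintype.card {σ : A ≃ Fin m // σ.symm 0 ∈ Set.range (F ω)} := by
    rw [Nat.card_eq_fintype_card]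
    exact Fintype.card_congr (Equiv.subtypeEquivRight hiff)
  rw [hcard]
  have key := menu_count (m := m) hm (Set.range (F ω))
  have hfact : (m.factorial : ℝ) ≠ 0 := Nat.cast_ne_zero.mpr m.factorial_ne_zero
  rw [← mul_div_assoc, eq_div_iff hfact]
  have key2 := congrArg (Nat.cast : ℕ → ℝ) key.symm
  push_cast at key2
  convert key2 using 3
  · rfl
  · exact (@Fintype.card_eq_nat_card _ _).trans (@Fintype.card_eq_nat_card _ _).symm
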